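/- Let η be a tnn update over ℤ^d. Then there exist n0 ∈ ℕ and, for each 1 ≤ i ≤ d, finitely many triples (q_{i,1}, a_{i,1}, b_{i,1}), ..., (q_{i,ℓ_i}, a_{i,ℓ_i}, b_{i,ℓ_i}) with q_{i,j} ∈ ℚ[x1,...,xd], a_{i,j} ∈ ℕ and b_{i,j} ∈ ℕ_{≥1}, such that for all e ∈ ℤ^d and all natural numbers n ≥ n0: (η^n(e))_i = Σ_{j=1}^{ℓ_i} q_{i,j}(e)·n^{a_{i,j}}·b_{i,j}^n. That is, every tnn update admits a normalized closed form given by normalized poly-exponential expressions. -/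

import Mathlib

open scoped Classical

noncomputable section

namespace Koat

/-! ### Formulas over polynomial atoms `p < q` -/

inductive Fml (V : Type*) where
  | lt  : MvPolynomial V ℤ → MvPolynomial V ℤ → Fml V
  | and : Fml V → Fml V → Fml V
  | or  : Fml V → Fml V → Fml V

namespace Fml

variable {V : Type*}

/-- A formula holds in a state `σ : V → ℤ`. -/
def holds (σ : V → ℤ) : Fml V → Prop
  | .lt p q  => MvPolynomial.eval σ p < MvPolynomial.eval σ q
  | .and f g => holds σ f ∧ holds σ g
  | .or f g  => holds σ f ∨ holds σ g

/-- Applying an update `η` to a formula (substituting `η v` for each variable `v`). -/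
def subst (η : V → MvPolynomial V ℤ) : Fml V → Fml V
  | .lt p q  => .lt (MvPolynomial.bind₁ η p) (MvPolynomial.bind₁ η q)
  | .and f g => .and (subst η f) (subst η g)
  | .or f g  => .or (subst η f) (subst η g)

/-- The variables occurring in a formula. -/
def vars : Fml V → Finset V
  | .lt p q  => p.vars ∪ q.vars
  | .and f g => vars f ∪ vars g
  | .or f g  => vars f ∪ vars g

/-- The list of atoms `(s₁, s₂)` (meaning `s₁ < s₂`) occurring in a formula. -/
def atoms : Fml V → List (MvPolynomial V ℤ × MvPolynomial V ℤ)
  | .lt p q  => [(p, q)]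
  | .and f g => atoms f ++ atoms g
  | .or f g  => atoms f ++ atoms g

end Fml

/-! ### Bounds -/

/-- The set `𝓑` of bounds: built from `ℕ ∪ {ω}`, variables, `+`, `·`, `k^{·}`. -/
inductive Bnd (V : Type*) where
  | const : ℕ∞ → Bnd V
  | var : V → Bnd V
  | add : Bnd V → Bnd V → Bnd V
  | mul : Bnd V → Bnd V → Bnd V
  | exp : ℕ → Bnd V → Bnd V

/-- `k ^ e` for `e : ℕ∞`. -/
def epow (k : ℕ) (e : ℕ∞) : ℕ∞ := if e = ⊤ then ⊤ else ((k ^ e.toNat : ℕ) : ℕ∞)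

namespace Bnd

variable {V : Type*}

/-- Evaluation of a bound in a (non-negative) state, with values in `ℕ ∪ {ω}`. -/
def eval (σ : V → ℕ) : Bnd V → ℕ∞
  | .const c => c
  | .var v => (σ v : ℕ∞)
  | .add b₁ b₂ => eval σ b₁ + eval σ b₂
  | .mul b₁ b₂ => eval σ b₁ * eval σ b₂
  | .exp k b => epow k (eval σ b)

/-- `b [v / f v | v ∈ PV]`: substitute the bound `f v` for every program variable `v ∈ PV`. -/
def substOn (PV : Set V) (f : V → Bnd V) : Bnd V → Bnd V
  | .const c => .const c
  | .var v => if v ∈ PV then f v else .var v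
  | .add b₁ b₂ => .add (substOn PV f b₁) (substOn PV f b₂)
  | .mul b₁ b₂ => .mul (substOn PV f b₁) (substOn PV f b₂)
  | .exp k b => .exp k (substOn PV f b)

end Bnd

/-- The sum of a list of bounds. -/
def bndSum {V : Type*} (l : List (Bnd V)) : Bnd V := l.foldr Bnd.add (Bnd.const 0)

/-! ### Integer programs -/

/-- A transition `(ℓ, φ, η, ℓ')`. -/
structure Trans (L V : Type*) where
  src : L
  guard : Fml V
  update : V → MvPolynomial V ℤ
  tgt : L

/-- A configuration `(ℓ, σ)`. -/
abbrev Config (L V : Type*) := L × (V → ℤ)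

/-- The evaluation step `(ℓ, σ) →_t (ℓ', σ')`: program variables are updated by `t.update`,
temporary variables (those outside `PV`) get arbitrary values. -/
def Step {L V : Type*} (PV : Set V) (t : Trans L V) (c c' : Config L V) : Prop :=
  c.1 = t.src ∧ c'.1 = t.tgt ∧ t.guard.holds c.2 ∧
    ∀ v ∈ PV, c'.2 v = MvPolynomial.eval c.2 (t.update v)

/-- `→_S`, the union of `→_t` over `t ∈ S`. -/
def StepAny {L V : Type*} (PV : Set V) (S : Finset (Trans L V)) :
    Config L V → Config L V → Prop :=
  fun c c' => ∃ t ∈ S, Step PV t c c'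

/-- `k`-fold composition of a relation. -/
def relPow {α : Type*} (R : α → α → Prop) : ℕ → α → α → Prop
  | 0 => Eq
  | n + 1 => Relation.Comp (relPow R n) R

/-- `→*_S ∘ →_t`. -/
def starThen {L V : Type*} (PV : Set V) (S : Finset (Trans L V)) (t : Trans L V) :
    Config L V → Config L V → Prop :=
  Relation.Comp (Relation.ReflTransGen (StepAny PV S)) (Step PV t)

/-- `|σ|`, the state of absolute values. -/
def absState {V : Type*} (σ : V → ℤ) : V → ℕ := fun v => (σ v).natAbs

/-- `RB` is a global runtime bound for the program `(PV, L, ℓ₀, T)`. -/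
def IsGlobalRB {L V : Type*} (PV : Set V) (ℓ₀ : L) (T : Finset (Trans L V))
    (RB : Trans L V → Bnd V) : Prop :=
  ∀ t ∈ T, ∀ σ₀ : V → ℤ,
    (⨆ k ∈ {k : ℕ | ∃ c' : Config L V, relPow (starThen PV T t) k (ℓ₀, σ₀) c'}, (k : ℕ∞))
      ≤ (RB t).eval (absState σ₀)

/-- `SB` is a size bound for the program `(PV, L, ℓ₀, T)`. -/
def IsSizeBound {L V : Type*} (PV : Set V) (ℓ₀ : L) (T : Finset (Trans L V))
    (SB : Trans L V → V → Bnd V) : Prop :=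
  ∀ t ∈ T, ∀ v ∈ PV, ∀ σ₀ : V → ℤ,
    (⨆ s ∈ {s : ℕ | ∃ c' : Config L V, starThen PV T t (ℓ₀, σ₀) c' ∧ s = (c'.2 v).natAbs},
      (s : ℕ∞)) ≤ (SB t v).eval (absState σ₀)

/-- The entry transitions `E_{T'}`. -/
def entrySet {L V : Type*} (T T' : Finset (Trans L V)) : Set (Trans L V) :=
  {t | t ∈ T ∧ t ∉ T' ∧ ∃ t' ∈ T', t'.src = t.tgt}

/-- `RB` is a local runtime bound for `T'gt` w.r.t. `T'` in the program `(PV, L, ℓ₀, T)`. -/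
def IsLocalRB {L V : Type*} (PV : Set V) (ℓ₀ : L) (T T'gt T' : Finset (Trans L V))
    (RB : Trans L V → Bnd V) : Prop :=
  ∀ t ∈ T'gt, ∀ r ∈ entrySet T T', ∀ σ : V → ℤ,
    (⨆ k ∈ {k : ℕ | ∃ (σ₀ : V → ℤ) (c' : Config L V),
        starThen PV T r (ℓ₀, σ₀) (r.tgt, σ) ∧ relPow (starThen PV T' t) k (r.tgt, σ) c'},
      (k : ℕ∞)) ≤ (RB r).eval (absState σ)

/-- Chaining two transitions: `t₁ ⋆ t₂`. -/
def chain2 {L V : Type*} (t₁ t₂ : Trans L V) : Trans L V :=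
  ⟨t₁.src, (t₁.guard).and (t₂.guard.subst t₁.update),
    fun v => MvPolynomial.bind₁ t₁.update (t₂.update v), t₂.tgt⟩

/-- Chaining a (nonempty) list of transitions `t₁ ⋆ ⋯ ⋆ tₙ` (with a default for `[]`). -/
def chainFold {L V : Type*} (dflt : Trans L V) : List (Trans L V) → Trans L V
  | [] => dflt
  | t :: ts => ts.foldl chain2 t

/-- The composed evaluation relation `→_{t₁} ∘ ⋯ ∘ →_{tₙ}`. -/
def stepsList {L V : Type*} (PV : Set V) : List (Trans L V) → Config L V → Config L V → Prop
  | [] => Eq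
  | t :: ts => Relation.Comp (Step PV t) (stepsList PV ts)

/-! ### Twn-loops -/

/-- An update `η` as a function on states `ℤ^d → ℤ^d`. -/
def updFun {d : ℕ} (η : Fin d → MvPolynomial (Fin d) ℤ) (σ : Fin d → ℤ) : Fin d → ℤ :=
  fun i => MvPolynomial.eval σ (η i)

/-- `η` is triangular weakly non-linear with data `c`, `p`:
`η xᵢ = cᵢ·xᵢ + pᵢ` with `pᵢ ∈ ℤ[x_{i+1},…,x_d]`. -/
def IsTriangular {d : ℕ} (η : Fin d → MvPolynomial (Fin d) ℤ) (c : Fin d → ℤ)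
    (p : Fin d → MvPolynomial (Fin d) ℤ) : Prop :=
  ∀ i, η i = MvPolynomial.C (c i) * MvPolynomial.X i + p i ∧ ∀ j ∈ (p i).vars, i < j

/-- Triangular weakly non-linear update. -/
def IsTWN {d : ℕ} (η : Fin d → MvPolynomial (Fin d) ℤ) : Prop :=
  ∃ c p, IsTriangular η c p

/-- Triangular weakly non-linear update with non-negative coefficients. -/
def IsTNN {d : ℕ} (η : Fin d → MvPolynomial (Fin d) ℤ) : Prop :=
  ∃ c p, IsTriangular η c p ∧ ∀ i, 0 ≤ c i

/-- `(b₁,a₁) >_lex (b₂,a₂)`. -/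
def lexGt (b₁ a₁ b₂ a₂ : ℕ) : Prop := b₂ < b₁ ∨ (b₁ = b₂ ∧ a₂ < a₁)

/-- The set of all valid `k`-monotonicity thresholds of `(b₁,a₁)` and `(b₂,a₂)`. -/
def mthSet (k b₁ a₁ b₂ a₂ : ℕ) : Set ℕ :=
  {n₀ | ∀ n ≥ n₀, k * (n ^ a₂ * b₂ ^ n) < n ^ a₁ * b₁ ^ n}

/-- The `k`-monotonicity threshold of `(b₁,a₁)` and `(b₂,a₂)` (the smallest member of
`mthSet`, when it exists). -/
def mth (k b₁ a₁ b₂ a₂ : ℕ) : ℕ := sInf (mthSet k b₁ a₁ b₂ a₂)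

/-- `M_j` as in the paper. -/
def Mdef (b a : ℕ → ℕ) (j : ℕ) : ℕ :=
  if b j = b (j - 1) then 0 else mth 1 (b j) (a j) (b (j - 1)) (a (j - 1) + 1)

/-- `N_j` as in the paper. -/
def Ndef (b a : ℕ → ℕ) (j : ℕ) : ℕ :=
  if j = 2 then 1
  else if j = 3 then mth 1 (b 2) (a 2) (b 1) (a 1)
  else
    max ((Finset.Icc 1 (j - 3)).sup fun i => mth 1 (b (j - 2)) (a (j - 2)) (b i) (a i))
      (mth (j - 2) (b (j - 1)) (a (j - 1)) (b (j - 2)) (a (j - 2)))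

/-- The over-approximation `⊔ {p j | j ∈ s}`: each monomial gets the maximal absolute value
of its coefficients in the `p j`. -/
def sqcupF {d : ℕ} {ι : Type*} (s : Finset ι) (p : ι → MvPolynomial (Fin d) ℤ) :
    MvPolynomial (Fin d) ℤ :=
  ∑ m ∈ s.biUnion fun j => (p j).support,
    MvPolynomial.monomial m (((s.sup fun j => ((p j).coeff m).natAbs : ℕ) : ℤ))

/-- Normalized poly-exponential expressions, as finite (formal) sums of
`p · n^a · b^n` with `p ∈ ℚ[x₁,…,x_d]`. -/
abbrev NPE (d : ℕ) := List (MvPolynomial (Fin d) ℚ × ℕ × ℕ)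

/-- The value of a normalized poly-exponential expression at `(e, n)`. -/
def evalNPE {d : ℕ} (l : NPE d) (e : Fin d → ℤ) (n : ℕ) : ℚ :=
  (l.map fun tr =>
    MvPolynomial.eval (fun i => (e i : ℚ)) tr.1 * (n : ℚ) ^ tr.2.1 * (tr.2.2 : ℚ) ^ n).sum


variable {d : ℕ}

def PolyQ {d : ℕ} (q : MvPolynomial (Fin d) ℚ) (e : Fin d → ℤ) : ℚ :=
  MvPolynomial.eval (fun i => (e i : ℚ)) q

def GoodNPE {d : ℕ} (l : NPE d) : Prop := ∀ tr ∈ l, 1 ≤ tr.2.2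

def IsPE {d : ℕ} (F : (Fin d → ℤ) → ℕ → ℚ) : Prop :=
  ∃ (n₀ : ℕ) (l : NPE d), GoodNPE l ∧ ∀ e n, n₀ ≤ n → F e n = evalNPE l e n

lemma evalNPE_nil (e : Fin d → ℤ) (n : ℕ) : evalNPE ([] : NPE d) e n = 0 := rfl

lemma evalNPE_cons (t : MvPolynomial (Fin d) ℚ × ℕ × ℕ) (l : NPE d) (e : Fin d → ℤ) (n : ℕ) :
    evalNPE (t :: l) e n = PolyQ t.1 e * (n : ℚ) ^ t.2.1 * (t.2.2 : ℚ) ^ n + evalNPE l e n := by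
  simp [evalNPE, PolyQ]

lemma evalNPE_append (l l' : NPE d) (e : Fin d → ℤ) (n : ℕ) :
    evalNPE (l ++ l') e n = evalNPE l e n + evalNPE l' e n := by
  simp [evalNPE]

def npeSmul {d : ℕ} (q : MvPolynomial (Fin d) ℚ) (l : NPE d) : NPE d :=
  l.map fun t => (q * t.1, t.2)

lemma goodNPE_npeSmul {q : MvPolynomial (Fin d) ℚ} {l : NPE d} (hl : GoodNPE l) :
    GoodNPE (npeSmul q l) := by
  intro tr htr
  simp only [npeSmul, List.mem_map] at htr
  obtain ⟨t, ht, rfl⟩ := htr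
  exact hl t ht

lemma evalNPE_npeSmul (q : MvPolynomial (Fin d) ℚ) (l : NPE d) (e : Fin d → ℤ) (n : ℕ) :
    evalNPE (npeSmul q l) e n = PolyQ q e * evalNPE l e n := by
  induction l with
  | nil => simp [npeSmul, evalNPE]
  | cons t l ih =>
    simp only [npeSmul, List.map_cons] at *
    rw [evalNPE_cons, evalNPE_cons, ih]
    show PolyQ (q * t.1) e * _ * _ + _ = _
    simp only [PolyQ, map_mul]
    ring

def npeMul {d : ℕ} (l l' : NPE d) : NPE d :=
  l.flatMap fun s => l'.map fun t => (s.1 * t.1, s.2.1 + t.2.1, s.2.2 * t.2.2)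

lemma goodNPE_npeMul {l l' : NPE d} (hl : GoodNPE l) (hl' : GoodNPE l') :
    GoodNPE (npeMul l l') := by
  intro tr htr
  simp only [npeMul, List.mem_flatMap, List.mem_map] at htr
  obtain ⟨s, hs, t, ht, rfl⟩ := htr
  exact Nat.one_le_iff_ne_zero.mpr (mul_ne_zero (by have := hl s hs; omega) (by have := hl' t ht; omega))

lemma evalNPE_single_mul (s : MvPolynomial (Fin d) ℚ × ℕ × ℕ) (l' : NPE d)
    (e : Fin d → ℤ) (n : ℕ) :
    evalNPE (l'.map fun t => (s.1 * t.1, s.2.1 + t.2.1, s.2.2 * t.2.2)) e n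
      = (PolyQ s.1 e * (n : ℚ) ^ s.2.1 * (s.2.2 : ℚ) ^ n) * evalNPE l' e n := by
  induction l' with
  | nil => simp [evalNPE]
  | cons t l' ih =>
    rw [List.map_cons, evalNPE_cons, evalNPE_cons, ih]
    show PolyQ (s.1 * t.1) e * (n:ℚ) ^ (s.2.1 + t.2.1) * ((s.2.2 * t.2.2 : ℕ) : ℚ) ^ n + _ = _
    simp only [PolyQ, map_mul, pow_add, Nat.cast_mul, mul_pow]
    ring

lemma evalNPE_npeMul (l l' : NPE d) (e : Fin d → ℤ) (n : ℕ) :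
    evalNPE (npeMul l l') e n = evalNPE l e n * evalNPE l' e n := by
  induction l with
  | nil => simp [npeMul, evalNPE]
  | cons s l ih =>
    rw [npeMul, List.flatMap_cons, evalNPE_append, evalNPE_single_mul, ← npeMul, ih, evalNPE_cons]
    ring

lemma IsPE.add {F G : (Fin d → ℤ) → ℕ → ℚ} (hF : IsPE F) (hG : IsPE G) :
    IsPE (fun e n => F e n + G e n) := by
  obtain ⟨n₁, l₁, h₁, hv₁⟩ := hF
  obtain ⟨n₂, l₂, h₂, hv₂⟩ := hG
  refine ⟨max n₁ n₂, l₁ ++ l₂, ?_, ?_⟩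
  · intro tr htr; rcases List.mem_append.mp htr with h | h
    exacts [h₁ tr h, h₂ tr h]
  · intro e n hn
    dsimp only
    rw [evalNPE_append, hv₁ e n (le_trans (le_max_left _ _) hn),
      hv₂ e n (le_trans (le_max_right _ _) hn)]

lemma IsPE.mul {F G : (Fin d → ℤ) → ℕ → ℚ} (hF : IsPE F) (hG : IsPE G) :
    IsPE (fun e n => F e n * G e n) := by
  obtain ⟨n₁, l₁, h₁, hv₁⟩ := hF
  obtain ⟨n₂, l₂, h₂, hv₂⟩ := hG
  refine ⟨max n₁ n₂, npeMul l₁ l₂, goodNPE_npeMul h₁ h₂, ?_⟩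
  intro e n hn
  dsimp only
  rw [evalNPE_npeMul, hv₁ e n (le_trans (le_max_left _ _) hn),
    hv₂ e n (le_trans (le_max_right _ _) hn)]

lemma isPE_polyQ (q : MvPolynomial (Fin d) ℚ) : IsPE (fun e _ => PolyQ q e) := by
  refine ⟨0, [(q, 0, 1)], ?_, ?_⟩
  · intro tr htr; simp at htr; simp [htr]
  · intro e n _; simp [evalNPE_cons, evalNPE_nil]

lemma isPE_zero : IsPE (fun _ _ => (0 : ℚ) : (Fin d → ℤ) → ℕ → ℚ) :=
  ⟨0, [], fun _ h => absurd h List.not_mem_nil, fun _ _ _ => rfl⟩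

lemma isPE_const (a : ℚ) : IsPE (fun _ _ => a : (Fin d → ℤ) → ℕ → ℚ) := by
  have := isPE_polyQ (d := d) (MvPolynomial.C a)
  simpa [PolyQ] using this

lemma isPE_eval (p : MvPolynomial (Fin d) ℚ) (F : Fin d → (Fin d → ℤ) → ℕ → ℚ)
    (hF : ∀ j, IsPE (F j)) :
    IsPE (fun e n => MvPolynomial.eval (fun j => F j e n) p) := by
  induction p using MvPolynomial.induction_on with
  | C a => simpa using isPE_const a
  | add p q hp hq => simp only [map_add]; exact hp.add hq
  | mul_X p j hp => simp only [map_mul, MvPolynomial.eval_X]; exact hp.mul (hF j)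


lemma exists_poly_geom (b c : ℚ) (hbc : b ≠ c) :
    ∀ a : ℕ, ∃ P : Polynomial ℚ, ∀ n : ℕ, b * P.eval ((n : ℚ) + 1) - c * P.eval (n : ℚ) = (n : ℚ) ^ a := by
  intro a
  induction a using Nat.strong_induction_on with
  | _ a ih =>
    choose f hf using ih
    set g : ℕ → Polynomial ℚ := fun m => if h : m < a then f m h else 0 with hg
    have hgspec : ∀ m, m < a → ∀ n : ℕ,
        b * (g m).eval ((n : ℚ) + 1) - c * (g m).eval (n : ℚ) = (n : ℚ) ^ m := by
      intro m hm n
      simp only [hg, dif_pos hm]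
      exact hf m hm n
    have hbc' : b - c ≠ 0 := sub_ne_zero.mpr hbc
    refine ⟨(b - c)⁻¹ • (Polynomial.X ^ a) -
      ((b - c)⁻¹ * b) • ∑ k ∈ Finset.range a, (a.choose k : ℚ) • g k, ?_⟩
    intro n
    have expand : ((n : ℚ) + 1) ^ a
        = (n : ℚ) ^ a + ∑ k ∈ Finset.range a, (n : ℚ) ^ k * (a.choose k : ℚ) := by
      rw [add_pow, Finset.sum_range_succ]
      simp [add_comm]
    set A := ∑ k ∈ Finset.range a, (a.choose k : ℚ) * (g k).eval ((n : ℚ) + 1) with hA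
    set B := ∑ k ∈ Finset.range a, (a.choose k : ℚ) * (g k).eval (n : ℚ) with hB
    have hD : b * A - c * B = ∑ k ∈ Finset.range a, (n : ℚ) ^ k * (a.choose k : ℚ) := by
      rw [hA, hB, Finset.mul_sum, Finset.mul_sum, ← Finset.sum_sub_distrib]
      refine Finset.sum_congr rfl fun k hk => ?_
      rw [← hgspec k (Finset.mem_range.mp hk) n]
      ring
    simp only [Polynomial.eval_sub, Polynomial.eval_smul, Polynomial.eval_pow, Polynomial.eval_X,
      Polynomial.eval_finset_sum, smul_eq_mul]
    rw [← hA, ← hB, expand, ← hD]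
    field_simp
    ring

lemma exists_poly_shift :
    ∀ a : ℕ, ∃ Q : Polynomial ℚ, ∀ n : ℕ, Q.eval ((n : ℚ) + 1) - Q.eval (n : ℚ) = (n : ℚ) ^ a := by
  intro a
  induction a using Nat.strong_induction_on with
  | _ a ih =>
    choose f hf using ih
    set g : ℕ → Polynomial ℚ := fun m => if h : m < a then f m h else 0 with hg
    have hgspec : ∀ m, m < a → ∀ n : ℕ,
        (g m).eval ((n : ℚ) + 1) - (g m).eval (n : ℚ) = (n : ℚ) ^ m := by
      intro m hm n
      simp only [hg, dif_pos hm]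
      exact hf m hm n
    have ha : ((a : ℚ) + 1) ≠ 0 := by positivity
    refine ⟨((a : ℚ) + 1)⁻¹ • (Polynomial.X ^ (a + 1) -
      ∑ k ∈ Finset.range a, ((a + 1).choose k : ℚ) • g k), ?_⟩
    intro n
    have expand : ((n : ℚ) + 1) ^ (a + 1)
        = (n : ℚ) ^ (a + 1) + ((a : ℚ) + 1) * (n : ℚ) ^ a
          + ∑ k ∈ Finset.range a, (n : ℚ) ^ k * ((a + 1).choose k : ℚ) := by
      rw [add_pow, Finset.sum_range_succ, Finset.sum_range_succ]
      simp [Nat.choose_succ_self_right]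
      ring
    set A := ∑ k ∈ Finset.range a, ((a + 1).choose k : ℚ) * (g k).eval ((n : ℚ) + 1) with hA
    set B := ∑ k ∈ Finset.range a, ((a + 1).choose k : ℚ) * (g k).eval (n : ℚ) with hB
    have hD : A - B = ∑ k ∈ Finset.range a, (n : ℚ) ^ k * ((a + 1).choose k : ℚ) := by
      rw [hA, hB, ← Finset.sum_sub_distrib]
      refine Finset.sum_congr rfl fun k hk => ?_
      rw [← hgspec k (Finset.mem_range.mp hk) n]
      ring
    simp only [Polynomial.eval_smul, Polynomial.eval_sub, Polynomial.eval_pow, Polynomial.eval_X,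
      Polynomial.eval_finset_sum, smul_eq_mul]
    rw [← hA, ← hB, expand, ← hD]
    field_simp
    ring



lemma list_range_sum (m : ℕ) (f : ℕ → ℚ) :
    ((List.range m).map f).sum = ∑ j ∈ Finset.range m, f j := by
  induction m with
  | zero => simp
  | succ m ih =>
    rw [List.range_succ, List.map_append, List.sum_append, Finset.sum_range_succ, ih]
    simp

def npeOfPoly {d : ℕ} (P : Polynomial ℚ) (b : ℕ) : NPE d :=
  (List.range (P.natDegree + 1)).map fun j => (MvPolynomial.C (P.coeff j), j, b)

lemma goodNPE_npeOfPoly {P : Polynomial ℚ} {b : ℕ} (hb : 1 ≤ b) :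
    GoodNPE (npeOfPoly (d := d) P b) := by
  intro tr htr
  simp only [npeOfPoly, List.mem_map] at htr
  obtain ⟨j, _, rfl⟩ := htr
  exact hb

lemma evalNPE_npeOfPoly (P : Polynomial ℚ) (b : ℕ) (e : Fin d → ℤ) (n : ℕ) :
    evalNPE (npeOfPoly P b) e n = P.eval (n : ℚ) * (b : ℚ) ^ n := by
  rw [evalNPE, npeOfPoly, List.map_map, list_range_sum, Polynomial.eval_eq_sum_range,
    Finset.sum_mul]
  refine Finset.sum_congr rfl fun j _ => ?_
  simp [Function.comp]
  try ring

lemma exists_particular (c b a : ℕ) (hb : 1 ≤ b) (hc : 1 ≤ c) :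
    ∃ (φ : ℕ → ℚ) (lφ : NPE d), GoodNPE lφ ∧
      (∀ (e : Fin d → ℤ) (n : ℕ), φ n = evalNPE lφ e n) ∧
      ∀ n : ℕ, φ (n + 1) = c * φ n + (n : ℚ) ^ a * (b : ℚ) ^ n := by
  have hb0 : (b : ℚ) ≠ 0 := by
    have : (0 : ℚ) < b := by exact_mod_cast hb
    exact this.ne'
  by_cases hbc : (b : ℚ) = (c : ℚ)
  · obtain ⟨Q, hQ⟩ := exists_poly_shift a
    refine ⟨fun n => (b : ℚ)⁻¹ * Q.eval (n : ℚ) * (b : ℚ) ^ n,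
      npeOfPoly ((b : ℚ)⁻¹ • Q) b, goodNPE_npeOfPoly hb, ?_, ?_⟩
    · intro e n
      rw [evalNPE_npeOfPoly, Polynomial.eval_smul, smul_eq_mul]
      try ring
    · intro n
      have h := hQ n
      rw [← hbc]
      push_cast
      have : Polynomial.eval ((n : ℚ) + 1) Q = Polynomial.eval (n : ℚ) Q + (n : ℚ) ^ a := by
        linarith [h]
      rw [this, pow_succ]
      field_simp
  · obtain ⟨P, hP⟩ := exists_poly_geom (b : ℚ) (c : ℚ) hbc a
    refine ⟨fun n => P.eval (n : ℚ) * (b : ℚ) ^ n, npeOfPoly P b, goodNPE_npeOfPoly hb, ?_, ?_⟩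
    · intro e n
      rw [evalNPE_npeOfPoly]
    · intro n
      have h := hP n
      push_cast
      rw [pow_succ]
      have : (b : ℚ) * Polynomial.eval ((n : ℚ) + 1) P
          = (c : ℚ) * Polynomial.eval (n : ℚ) P + (n : ℚ) ^ a := by linarith [h]
      calc Polynomial.eval ((n : ℚ) + 1) P * ((b : ℚ) ^ n * (b : ℚ))
          = ((b : ℚ) * Polynomial.eval ((n : ℚ) + 1) P) * (b : ℚ) ^ n := by ring
        _ = ((c : ℚ) * Polynomial.eval (n : ℚ) P + (n : ℚ) ^ a) * (b : ℚ) ^ n := by rw [this]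
        _ = _ := by ring

def shiftTerm {d : ℕ} (t : MvPolynomial (Fin d) ℚ × ℕ × ℕ) : NPE d :=
  (List.range (t.2.1 + 1)).map fun k =>
    (MvPolynomial.C ((t.2.1.choose k : ℚ) * (-1) ^ (t.2.1 - k) / (t.2.2 : ℚ)) * t.1, k, t.2.2)

lemma evalNPE_shiftTerm (t : MvPolynomial (Fin d) ℚ × ℕ × ℕ) (ht : 1 ≤ t.2.2)
    (e : Fin d → ℤ) (n : ℕ) (hn : 1 ≤ n) :
    evalNPE (shiftTerm t) e n
      = PolyQ t.1 e * ((n - 1 : ℕ) : ℚ) ^ t.2.1 * (t.2.2 : ℚ) ^ (n - 1) := by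
  obtain ⟨q, a, b⟩ := t
  simp only at ht ⊢
  have hb0 : (b : ℚ) ≠ 0 := by
    have : (0 : ℚ) < b := by exact_mod_cast ht
    exact this.ne'
  have hcast : ((n - 1 : ℕ) : ℚ) = (n : ℚ) - 1 := by
    push_cast [hn]
    ring
  have hpow : (b : ℚ) ^ (n - 1) = (b : ℚ) ^ n * (b : ℚ)⁻¹ := by
    rw [pow_sub₀ _ hb0 hn, pow_one]
  have hbinom : ((n : ℚ) - 1) ^ a
      = ∑ k ∈ Finset.range (a + 1), (n : ℚ) ^ k * (-1) ^ (a - k) * (a.choose k : ℚ) := by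
    rw [sub_eq_add_neg, add_pow]
  rw [hcast, hpow, hbinom, evalNPE, shiftTerm, List.map_map, list_range_sum, Finset.mul_sum,
    Finset.sum_mul]
  refine Finset.sum_congr rfl fun k _ => ?_
  simp only [Function.comp, PolyQ, map_mul, MvPolynomial.eval_C]
  field_simp

lemma shiftNPE (l : NPE d) (hl : GoodNPE l) :
    ∃ l' : NPE d, GoodNPE l' ∧ ∀ e n, 1 ≤ n → evalNPE l' e n = evalNPE l e (n - 1) := by
  induction l with
  | nil => exact ⟨[], fun _ h => absurd h List.not_mem_nil, fun _ _ _ => rfl⟩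
  | cons t l ih =>
    obtain ⟨l', hg', hv'⟩ := ih fun tr htr => hl tr (List.mem_cons_of_mem _ htr)
    have ht : 1 ≤ t.2.2 := hl t List.mem_cons_self
    refine ⟨shiftTerm t ++ l', ?_, ?_⟩
    · intro tr htr
      rcases List.mem_append.mp htr with h | h
      · simp only [shiftTerm, List.mem_map] at h
        obtain ⟨k, _, rfl⟩ := h
        exact ht
      · exact hg' tr h
    · intro e n hn
      rw [evalNPE_append, evalNPE_shiftTerm t ht e n hn, hv' e n hn, evalNPE_cons]

lemma exists_Phi (c : ℕ) (hc : 1 ≤ c) (l : NPE d) (hl : GoodNPE l) :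
    ∃ (Φ : (Fin d → ℤ) → ℕ → ℚ) (lΦ : NPE d), GoodNPE lΦ ∧
      (∀ e n, Φ e n = evalNPE lΦ e n) ∧
      ∀ e n, Φ e (n + 1) = c * Φ e n + evalNPE l e n := by
  induction l with
  | nil =>
    exact ⟨fun _ _ => 0, [], fun _ h => absurd h List.not_mem_nil,
      fun _ _ => rfl, fun _ _ => by simp [evalNPE_nil]⟩
  | cons t l ih =>
    obtain ⟨Φ, lΦ, hg, hv, hrec⟩ := ih fun tr htr => hl tr (List.mem_cons_of_mem _ htr)
    have ht : 1 ≤ t.2.2 := hl t List.mem_cons_self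
    obtain ⟨φ, lφ, hgφ, hvφ, hrecφ⟩ := exists_particular (d := d) c t.2.2 t.2.1 ht hc
    refine ⟨fun e n => PolyQ t.1 e * φ n + Φ e n, npeSmul t.1 lφ ++ lΦ, ?_, ?_, ?_⟩
    · intro tr htr
      rcases List.mem_append.mp htr with h | h
      exacts [goodNPE_npeSmul hgφ tr h, hg tr h]
    · intro e n
      dsimp only
      rw [evalNPE_append, evalNPE_npeSmul, ← hvφ e n, ← hv e n]
    · intro e n
      dsimp only
      rw [hrecφ n, hrec e n, evalNPE_cons]
      ring

lemma evalNPE_fixed (l : NPE d) (n : ℕ) :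
    ∃ R : MvPolynomial (Fin d) ℚ, ∀ e, evalNPE l e n = PolyQ R e := by
  induction l with
  | nil => exact ⟨0, fun e => by simp [evalNPE_nil, PolyQ]⟩
  | cons t l ih =>
    obtain ⟨R, hR⟩ := ih
    refine ⟨MvPolynomial.C ((n : ℚ) ^ t.2.1 * (t.2.2 : ℚ) ^ n) * t.1 + R, fun e => ?_⟩
    rw [evalNPE_cons, hR]
    simp only [PolyQ, map_add, map_mul, MvPolynomial.eval_C]
    ring

lemma recSolve (c : ℕ) (X G : (Fin d → ℤ) → ℕ → ℚ)
    (hG : IsPE G) (hrec : ∀ e n, X e (n + 1) = c * X e n + G e n)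
    (hpoly : ∀ n : ℕ, ∃ Q : MvPolynomial (Fin d) ℚ, ∀ e, X e n = PolyQ Q e) :
    IsPE X := by
  obtain ⟨n₁, l, hl, hval⟩ := hG
  rcases Nat.eq_zero_or_pos c with hc | hc
  · -- c = 0 : X e n = G e (n-1) for n ≥ n₁ + 1
    obtain ⟨l', hg', hv'⟩ := shiftNPE l hl
    refine ⟨n₁ + 1, l', hg', ?_⟩
    intro e n hn
    have h1 : 1 ≤ n := le_trans (Nat.le_add_left 1 n₁) hn
    have h2 : n - 1 + 1 = n := Nat.succ_pred_eq_of_pos h1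
    have h3 : n₁ ≤ n - 1 := by omega
    rw [← h2, hrec e (n - 1), hc]
    push_cast
    rw [zero_mul, zero_add, hval e (n - 1) h3, ← hv' e n h1]
    rw [h2]
  · obtain ⟨Φ, lΦ, hgΦ, hvΦ, hrecΦ⟩ := exists_Phi c hc l hl
    obtain ⟨Q, hQ⟩ := hpoly n₁
    obtain ⟨R, hR⟩ := evalNPE_fixed lΦ n₁
    have hc0 : (c : ℚ) ≠ 0 := by
      have : (0 : ℚ) < c := by exact_mod_cast hc
      exact this.ne'
    have key : ∀ e n, n₁ ≤ n →
        X e n = Φ e n + (X e n₁ - Φ e n₁) * (c : ℚ) ^ (n - n₁) := by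
      intro e n hn
      induction n, hn using Nat.le_induction with
      | base => simp
      | succ n hn ihn =>
        have hs : n + 1 - n₁ = (n - n₁) + 1 := by omega
        rw [hrec e n, ihn, hval e n hn, hs, pow_succ, hrecΦ e n]
        ring
    refine ⟨n₁, lΦ ++ [(MvPolynomial.C (((c : ℚ) ^ n₁)⁻¹) * (Q - R), 0, c)], ?_, ?_⟩
    · intro tr htr
      rcases List.mem_append.mp htr with h | h
      · exact hgΦ tr h
      · simp only [List.mem_singleton] at h
        subst h
        exact hc
    · intro e n hn
      have hpowsub : (c : ℚ) ^ (n - n₁) = (c : ℚ) ^ n / (c : ℚ) ^ n₁ :=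
        pow_sub₀ _ hc0 hn
      rw [key e n hn, evalNPE_append, hvΦ e n, hvΦ e n₁, hR e, hQ e]
      rw [evalNPE_cons, evalNPE_nil, hpowsub]
      simp only [PolyQ, map_mul, map_sub, MvPolynomial.eval_C, pow_zero]
      field_simp
      try ring


lemma cast_eval {d : ℕ} (σ : Fin d → ℤ) (p : MvPolynomial (Fin d) ℤ) :
    ((MvPolynomial.eval σ p : ℤ) : ℚ)
      = MvPolynomial.eval₂ (Int.castRingHom ℚ) (fun j => ((σ j : ℚ))) p := by
  have h := MvPolynomial.eval₂_comp_left (Int.castRingHom ℚ) (RingHom.id ℤ) σ p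
  rw [MvPolynomial.eval₂_id] at h
  simpa [Function.comp_def] using h

lemma eval_congr_vars {d : ℕ} (p : MvPolynomial (Fin d) ℚ) (g₁ g₂ : Fin d → ℚ)
    (h : ∀ j ∈ p.vars, g₁ j = g₂ j) : MvPolynomial.eval g₁ p = MvPolynomial.eval g₂ p :=
  MvPolynomial.eval₂Hom_congr' rfl (fun j hj _ => h j hj) rfl

lemma iter_poly {d : ℕ} (η : Fin d → MvPolynomial (Fin d) ℤ) :
    ∀ n : ℕ, ∃ Q : Fin d → MvPolynomial (Fin d) ℚ, ∀ (e : Fin d → ℤ) (i : Fin d),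
      (((updFun η)^[n] e) i : ℚ) = PolyQ (Q i) e := by
  intro n
  induction n with
  | zero => exact ⟨fun i => MvPolynomial.X i, fun e i => by simp [PolyQ]⟩
  | succ n ih =>
    obtain ⟨Q, hQ⟩ := ih
    refine ⟨fun i => MvPolynomial.bind₁ Q (MvPolynomial.map (Int.castRingHom ℚ) (η i)),
      fun e i => ?_⟩
    rw [Function.iterate_succ_apply']
    show ((MvPolynomial.eval ((updFun η)^[n] e) (η i) : ℤ) : ℚ) = _
    rw [cast_eval, PolyQ]
    have hb : MvPolynomial.eval (fun j => ((e j : ℚ)))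
          (MvPolynomial.bind₁ Q (MvPolynomial.map (Int.castRingHom ℚ) (η i)))
        = MvPolynomial.eval (fun j => MvPolynomial.eval (fun k => ((e k : ℚ))) (Q j))
          (MvPolynomial.map (Int.castRingHom ℚ) (η i)) :=
      MvPolynomial.eval₂Hom_bind₁ (RingHom.id ℚ) _ Q _
    rw [hb, MvPolynomial.eval_map]
    congr 1
    funext j
    exact hQ e j

lemma main_aux {d : ℕ} (η : Fin d → MvPolynomial (Fin d) ℤ)
    (c : Fin d → ℤ) (p : Fin d → MvPolynomial (Fin d) ℤ)
    (htri : IsTriangular η c p) (hnn : ∀ i, 0 ≤ c i) :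
    ∀ i : Fin d, IsPE (fun e n => (((updFun η)^[n] e) i : ℚ)) := by
  suffices H : ∀ m : ℕ, ∀ i : Fin d, d - i.val ≤ m →
      IsPE (fun e n => (((updFun η)^[n] e) i : ℚ)) from
    fun i => H d i (Nat.sub_le _ _)
  intro m
  induction m with
  | zero =>
    intro i h
    exact absurd h (by have := i.isLt; omega)
  | succ m ih =>
    intro i _
    have hIH : ∀ j : Fin d, i < j → IsPE (fun e n => (((updFun η)^[n] e) j : ℚ)) := by
      intro j hj
      refine ih j ?_
      have h1 : i.val < j.val := hj
      have h2 := j.isLt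
      omega
    obtain ⟨hηi, hvars⟩ := htri i
    set cn : ℕ := (c i).toNat with hcn
    have hci : ((cn : ℤ) : ℚ) = ((c i : ℤ) : ℚ) := by
      rw [hcn, Int.toNat_of_nonneg (hnn i)]
    set q : MvPolynomial (Fin d) ℚ := MvPolynomial.map (Int.castRingHom ℚ) (p i) with hq
    set F : Fin d → (Fin d → ℤ) → ℕ → ℚ :=
      fun j e n => if i < j then (((updFun η)^[n] e) j : ℚ) else 0 with hF
    have hFPE : ∀ j, IsPE (F j) := by
      intro j
      by_cases h : i < j
      · simpa [hF, h] using hIH j h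
      · simpa [hF, h] using isPE_zero (d := d)
    have hGPE : IsPE (fun e n => MvPolynomial.eval (fun j => F j e n) q) := isPE_eval q F hFPE
    have hqvars : ∀ j ∈ q.vars, i < j := fun j hj => hvars j (MvPolynomial.vars_map (p i) (f := Int.castRingHom ℚ) hj)
    have hrec : ∀ e n, (((updFun η)^[n + 1] e) i : ℚ)
        = cn * (((updFun η)^[n] e) i : ℚ) + MvPolynomial.eval (fun j => F j e n) q := by
      intro e n
      rw [Function.iterate_succ_apply']
      show ((MvPolynomial.eval ((updFun η)^[n] e) (η i) : ℤ) : ℚ) = _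
      rw [hηi]
      have h1 : ((MvPolynomial.eval ((updFun η)^[n] e) (p i) : ℤ) : ℚ)
          = MvPolynomial.eval (fun j => F j e n) q := by
        rw [cast_eval, MvPolynomial.eval₂_eq_eval_map, ← hq]
        refine eval_congr_vars _ _ _ (fun j hj => ?_)
        simp [hF, hqvars j hj]
      rw [map_add, map_mul, MvPolynomial.eval_C, MvPolynomial.eval_X]
      push_cast
      rw [h1]
      push_cast at hci
      rw [hci]
    have hpoly : ∀ n : ℕ, ∃ Q : MvPolynomial (Fin d) ℚ, ∀ e,
        (((updFun η)^[n] e) i : ℚ) = PolyQ Q e := by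
      intro n
      obtain ⟨Q, hQ⟩ := iter_poly η n
      exact ⟨Q i, fun e => hQ e i⟩
    exact recSolve cn _ _ hGPE hrec hpoly

/-- every tnn update admits a normalized closed form:
there are `n₀` and normalized poly-exponential expressions whose values give the
components of `η^n(e)` for all `n ≥ n₀`. -/
theorem tnn_closed_form {d : ℕ} (η : Fin d → MvPolynomial (Fin d) ℤ) (htnn : IsTNN η) :
    ∃ (n₀ : ℕ) (cl : Fin d → NPE d),
      (∀ i : Fin d, ∀ tr ∈ cl i, 1 ≤ tr.2.2) ∧
      ∀ (e : Fin d → ℤ) (n : ℕ), n₀ ≤ n → ∀ i : Fin d,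
        (((updFun η)^[n] e) i : ℚ) = evalNPE (cl i) e n := by
  obtain ⟨c, p, htri, hnn⟩ := htnn
  have H := main_aux η c p htri hnn
  choose n₀ l hgood hval using H
  refine ⟨Finset.univ.sup n₀, l, hgood, ?_⟩
  intro e n hn i
  exact hval i e n (le_trans (Finset.le_sup (Finset.mem_univ i)) hn)

end Koat
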